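/- Let A = Σ_{j=1}^n λ_j u_j^{∘k} be odeco with orthonormal basis u_j and all nonzero Z-eigenvalues among λ_1,...,λ_r (λ_j = 0 for j > r), and suppose k is even. If for an initial condition x_0 = Σ_j α_j u_j the original system ẋ = A x^{k-1} satisfies λ_j α_j^{k-2} ≤ 0 for all j (stability condition), then the reduced system ż = A_red z^{k-1} with initial condition z_0 = V^T x_0 satisfies λ_j (z_0)_j^{k-2} < 0 for all j ≤ r with (z_0)_j ≠ 0, hence every nonzero coordinate of z(t) decays monotonically in absolute value to 0. -/

import Mathlib

open Finset

private lemma deriv_lower {f f' : ℝ → ℝ} {a b C : ℝ} (hab : a ≤ b)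
    (hf : ∀ t ∈ Set.Icc a b, HasDerivAt f (f' t) t)
    (hC : ∀ t ∈ Set.Icc a b, C ≤ f' t) :
    f a + C * (b - a) ≤ f b := by
  set g : ℝ → ℝ := fun t => f t - C * t with hg
  have hg' : ∀ t ∈ Set.Icc a b, HasDerivAt g (f' t - C) t := by
    intro t ht
    have h1 : HasDerivAt (fun t : ℝ => C * t) C t := by
      simpa using (hasDerivAt_id t).const_mul C
    exact (hf t ht).sub h1
  have hmono : MonotoneOn g (Set.Icc a b) := by
    apply monotoneOn_of_deriv_nonneg (convex_Icc a b)
    · exact fun t ht => (hg' t ht).continuousAt.continuousWithinAt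
    · exact fun t ht =>
        (hg' t (interior_subset ht)).differentiableAt.differentiableWithinAt
    · intro t ht
      rw [(hg' t (interior_subset ht)).deriv]
      linarith [hC t (interior_subset ht)]
  have h := hmono (Set.left_mem_Icc.mpr hab) (Set.right_mem_Icc.mpr hab) hab
  simp only [hg] at h
  nlinarith [h]

private lemma deriv_upper {f f' : ℝ → ℝ} {a b C : ℝ} (hab : a ≤ b)
    (hf : ∀ t ∈ Set.Icc a b, HasDerivAt f (f' t) t)
    (hC : ∀ t ∈ Set.Icc a b, f' t ≤ C) :
    f b ≤ f a + C * (b - a) := by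
  have h := deriv_lower (f := fun t => -f t) (f' := fun t => -f' t) (C := -C) hab
    (fun t ht => (hf t ht).neg) (fun t ht => by linarith [hC t ht])
  nlinarith [h]

private lemma key_ode {lam : ℝ} (hlam : lam < 0) {k : ℕ} (hk : 1 ≤ k) (z : ℝ → ℝ)
    (hz : ∀ t, HasDerivAt z (lam * z t ^ k) t) (h0 : 0 < z 0) :
    (∀ t, 0 ≤ t → 0 < z t) ∧ StrictAntiOn z (Set.Ici 0) ∧
      Filter.Tendsto z Filter.atTop (nhds 0) := by
  have hcont : Continuous z :=
    continuous_iff_continuousAt.mpr fun t => (hz t).continuousAt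
  -- positivity
  have hpos : ∀ t, 0 ≤ t → 0 < z t := by
    by_contra hc
    push_neg at hc
    obtain ⟨t₁, ht₁, hz₁⟩ := hc
    have hzero1 : ∃ t ∈ Set.Icc 0 t₁, z t = 0 := by
      have := intermediate_value_Icc' ht₁ (hcont.continuousOn (s := Set.Icc 0 t₁))
      obtain ⟨t, ht, hzt⟩ := this ⟨hz₁, h0.le⟩
      exact ⟨t, ht, hzt⟩
    set S : Set ℝ := Set.Icc 0 t₁ ∩ z ⁻¹' {0} with hS
    have hSclosed : IsClosed S := isClosed_Icc.inter (isClosed_singleton.preimage hcont)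
    have hSne : S.Nonempty := by
      obtain ⟨t, ht, hzt⟩ := hzero1; exact ⟨t, ht, by simpa using hzt⟩
    have hSbdd : BddBelow S := ⟨0, fun t ht => ht.1.1⟩
    set t₀ := sInf S with ht₀
    have ht₀mem : t₀ ∈ S := hSclosed.csInf_mem hSne hSbdd
    have hzt₀ : z t₀ = 0 := by simpa using ht₀mem.2
    have ht₀nonneg : 0 ≤ t₀ := ht₀mem.1.1
    have ht₀pos : 0 < t₀ := by
      rcases ht₀nonneg.lt_or_eq with h | h
      · exact h
      · exfalso; rw [← h] at hzt₀; linarith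
    -- z > 0 on [0, t₀)
    have hzpos : ∀ s, 0 ≤ s → s < t₀ → 0 < z s := by
      intro s hs hst
      by_contra h
      push_neg at h
      have := intermediate_value_Icc' hs (hcont.continuousOn (s := Set.Icc 0 s))
      obtain ⟨t, ht, hzt⟩ := this ⟨h, h0.le⟩
      have htS : t ∈ S := ⟨⟨ht.1, le_trans ht.2 (le_trans hst.le ht₀mem.1.2)⟩, by simpa using hzt⟩
      have : t₀ ≤ t := csInf_le hSbdd htS
      linarith [ht.2]
    -- bound M on [0, t₀]
    obtain ⟨M₀, hM₀⟩ := (isCompact_Icc.image_of_continuousOn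
      (hcont.continuousOn (s := Set.Icc 0 t₀))).bddAbove
    set M := max M₀ 1 with hM
    have hMpos : (0:ℝ) < M := lt_of_lt_of_le one_pos (le_max_right _ _)
    have hMle : ∀ s ∈ Set.Icc (0:ℝ) t₀, z s ≤ M := fun s hs =>
      le_trans (hM₀ ⟨s, hs, rfl⟩) (le_max_left _ _)
    set C := lam * M ^ (k - 1) with hC
    have hCneg : C ≤ 0 := le_of_lt (mul_neg_of_neg_of_pos hlam (pow_pos hMpos _))
    have hlog : ∀ s, 0 ≤ s → s < t₀ → Real.log (z 0) + C * s ≤ Real.log (z s) := by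
      intro s hs hst
      have h := deriv_lower (f := fun t => Real.log (z t))
        (f' := fun t => lam * z t ^ (k - 1)) (C := C) hs
        (fun t ht => by
          have hzt : 0 < z t := hzpos t ht.1 (lt_of_le_of_lt ht.2 hst)
          have h1 := (hz t).log hzt.ne'
          have h2 : lam * z t ^ k / z t = lam * z t ^ (k - 1) := by
            have : z t ^ k = z t ^ (k - 1) * z t := by
              rw [← pow_succ]; congr 1; omega
            rw [this]
            field_simp
          rwa [h2] at h1)
        (fun t ht => by
          have hzt : 0 < z t := hzpos t ht.1 (lt_of_le_of_lt ht.2 hst)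
          have hle : z t ≤ M := hMle t ⟨ht.1, le_trans ht.2 hst.le⟩
          have h3 : z t ^ (k-1) ≤ M ^ (k-1) := pow_le_pow_left₀ hzt.le hle _
          rw [hC]
          exact mul_le_mul_of_nonpos_left h3 hlam.le)
      simpa using h
    set ε := Real.exp (Real.log (z 0) + C * t₀) with hε
    have hεpos : 0 < ε := Real.exp_pos _
    have hεle : ∀ s, 0 ≤ s → s < t₀ → ε ≤ z s := by
      intro s hs hst
      have h1 := hlog s hs hst
      have h2 : C * t₀ ≤ C * s := mul_le_mul_of_nonpos_left hst.le hCneg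
      have h3 : Real.log (z 0) + C * t₀ ≤ Real.log (z s) := by linarith
      calc ε ≤ Real.exp (Real.log (z s)) := Real.exp_le_exp.mpr h3
        _ = z s := Real.exp_log (hzpos s hs hst)
    -- take limit s → t₀⁻
    have hne : (nhdsWithin t₀ (Set.Iio t₀)).NeBot := nhdsLT_neBot t₀
    have htend : Filter.Tendsto z (nhdsWithin t₀ (Set.Iio t₀)) (nhds (z t₀)) :=
      (hcont.continuousAt.tendsto).mono_left nhdsWithin_le_nhds
    have hev : ∀ᶠ s in nhdsWithin t₀ (Set.Iio t₀), ε ≤ z s := by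
      have hmem : Set.Ioo (0:ℝ) t₀ ∈ nhdsWithin t₀ (Set.Iio t₀) := by
        rw [← Set.Ioi_inter_Iio]
        exact Filter.inter_mem
          (mem_nhdsWithin_of_mem_nhds (Ioi_mem_nhds ht₀pos)) self_mem_nhdsWithin
      filter_upwards [hmem] with s hs
      exact hεle s hs.1.le hs.2
    have : ε ≤ z t₀ := ge_of_tendsto htend hev
    linarith
  -- strict antitonicity
  have hanti : StrictAntiOn z (Set.Ici 0) := by
    apply strictAntiOn_of_deriv_neg (convex_Ici 0) hcont.continuousOn
    intro t ht
    rw [interior_Ici] at ht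
    rw [(hz t).deriv]
    exact mul_neg_of_neg_of_pos hlam (pow_pos (hpos t (le_of_lt ht)) k)
  refine ⟨hpos, hanti, ?_⟩
  -- convergence to 0
  set f : ℝ → ℝ := fun t => z (max t 0) with hf
  have hfanti : Antitone f := by
    intro s t hst
    rcases eq_or_lt_of_le (max_le_max_right (0:ℝ) hst) with h | h
    · simp only [hf]; rw [h]
    · exact (hanti (le_max_right s 0) (le_max_right t 0) h).le
  have hbdd : BddBelow (Set.range f) := by
    refine ⟨0, ?_⟩
    rintro x ⟨t, rfl⟩
    exact (hpos _ (le_max_right t 0)).le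
  have htends : Filter.Tendsto f Filter.atTop (nhds (⨅ t, f t)) :=
    tendsto_atTop_ciInf hfanti hbdd
  set L := ⨅ t, f t with hL
  have hL0 : 0 ≤ L := le_ciInf fun t => (hpos _ (le_max_right t 0)).le
  have hLle : ∀ t, L ≤ f t := fun t => ciInf_le hbdd t
  have hLzero : L = 0 := by
    by_contra hLne
    have hLpos : 0 < L := hL0.lt_of_ne (Ne.symm hLne)
    set c := lam * L ^ k with hc
    have hcneg : c < 0 := mul_neg_of_neg_of_pos hlam (pow_pos hLpos k)
    set T := (L - z 0 - 1) / c with hT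
    have hz0ge : L ≤ z 0 := by have := hLle 0; simpa [hf] using this
    have hTpos : 0 < T := div_pos_of_neg_of_neg (by linarith) hcneg
    have hcT : c * T = L - z 0 - 1 := by
      rw [hT, mul_comm, div_mul_cancel₀ _ hcneg.ne]
    have hzge : ∀ s, 0 ≤ s → L ≤ z s := by
      intro s hs
      have := hLle s
      simpa [hf, max_eq_left hs] using this
    have h := deriv_upper (f := z) (f' := fun t => lam * z t ^ k) (C := c) hTpos.le
      (fun t _ => hz t) (fun t ht => by
        have h1 : L ≤ z t := hzge t ht.1
        have h2 : L ^ k ≤ z t ^ k := pow_le_pow_left₀ hLpos.le h1 k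
        rw [hc]
        exact mul_le_mul_of_nonpos_left h2 hlam.le)
    rw [sub_zero, hcT] at h
    have := hzge T hTpos.le
    linarith
  rw [hLzero] at htends
  apply htends.congr'
  filter_upwards [Filter.eventually_ge_atTop (0:ℝ)] with t ht
  simp [hf, max_eq_left ht]

theorem reduced_stability {n r k : ℕ} (hr : r ≤ n) (hk : 1 ≤ k)
    (hkeven : Even (k + 1)) (lam : Fin n → ℝ)
    (hzero : ∀ a : Fin n, r ≤ (a : ℕ) → lam a = 0)
    (hnonzero : ∀ b : Fin r, lam (Fin.castLE hr b) ≠ 0)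
    (α : Fin n → ℝ)
    (hstab : ∀ a : Fin n, lam a * α a ^ (k - 1) ≤ 0) :
    (∀ b : Fin r, α (Fin.castLE hr b) ≠ 0 →
      lam (Fin.castLE hr b) * α (Fin.castLE hr b) ^ (k - 1) < 0) ∧
    (∀ z : ℝ → Fin r → ℝ,
      (∀ t b, HasDerivAt (fun s => z s b) (lam (Fin.castLE hr b) * z t b ^ k) t) →
      (∀ b, z 0 b = α (Fin.castLE hr b)) →
      ∀ b : Fin r, α (Fin.castLE hr b) ≠ 0 →
        StrictAntiOn (fun t => |z t b|) (Set.Ici (0 : ℝ)) ∧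
        Filter.Tendsto (fun t => z t b) Filter.atTop (nhds 0)) := by
  have hkodd : Odd k := Nat.not_even_iff_odd.mp (Nat.even_add_one.mp hkeven)
  have hk1even : Even (k - 1) := Nat.Odd.sub_odd hkodd odd_one
  have hlamneg : ∀ b : Fin r, α (Fin.castLE hr b) ≠ 0 → lam (Fin.castLE hr b) < 0 := by
    intro b hb
    set a := Fin.castLE hr b
    have hαpos : 0 < α a ^ (k - 1) := hk1even.pow_pos hb
    have h1 : lam a ≤ 0 := by nlinarith [hstab a]
    exact h1.lt_of_ne (hnonzero b)
  have hpart1 : ∀ b : Fin r, α (Fin.castLE hr b) ≠ 0 →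
      lam (Fin.castLE hr b) * α (Fin.castLE hr b) ^ (k - 1) < 0 := fun b hb =>
    mul_neg_of_neg_of_pos (hlamneg b hb) (hk1even.pow_pos hb)
  refine ⟨hpart1, ?_⟩
  intro z hz hz0 b hb
  set a := Fin.castLE hr b with ha
  have hlam : lam a < 0 := hlamneg b hb
  rcases hb.lt_or_gt with hneg | hpos
  · -- α a < 0 : use w = -z
    set w : ℝ → ℝ := fun t => -(z t b) with hw
    have hw' : ∀ t, HasDerivAt w (lam a * w t ^ k) t := by
      intro t
      have h1 := (hz t b).neg
      have h2 : -(lam a * z t b ^ k) = lam a * w t ^ k := by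
        simp only [hw, hkodd.neg_pow]; ring
      rwa [h2] at h1
    have hw0 : 0 < w 0 := by simp only [hw, hz0 b]; linarith
    obtain ⟨P, A, T⟩ := key_ode hlam hk w hw' hw0
    constructor
    · intro s hs t ht hst
      have hzs : z s b < 0 := by have := P s hs; simp only [hw] at this; linarith
      have hzt : z t b < 0 := by have := P t ht; simp only [hw] at this; linarith
      simp only [abs_of_neg hzs, abs_of_neg hzt]
      exact A hs ht hst
    · have := T.neg
      rw [neg_zero] at this
      convert this using 1
      funext t; simp [hw]
  · -- α a > 0
    have hz0b : 0 < z 0 b := by rw [hz0 b]; exact hpos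
    obtain ⟨P, A, T⟩ := key_ode hlam hk (fun t => z t b) (fun t => hz t b) hz0b
    constructor
    · intro s hs t ht hst
      simp only [abs_of_pos (P s hs), abs_of_pos (P t ht)]
      exact A hs ht hst
    · exact T
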